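/- arXiv:2310.04386 — 3 statements merged into one kernel-verified Lean document; each statement's English description precedes it below -/
import Mathlib

section
/- For alpha in (0,1/2), real t > 0, and xi > 0: Int_0^1 (1-x)^{alpha-1} * (xi+x)^{-alpha-1} dx = xi^{-alpha} / (alpha * (1+xi)). -/
open MeasureTheory Real

theorem stmt4 (α t ξ : ℝ) (hα0 : 0 < α) (hα : α < 1/2) (ht : 0 < t) (hξ : 0 < ξ) :
    ∫ x in (0:ℝ)..1, (1-x)^(α-1) * (ξ+x)^(-α-1) = ξ^(-α) / (α * (1+ξ)) := by
  set F : ℝ → ℝ := fun x => -((1-x)^α * (ξ+x)^(-α)) / (α*(1+ξ)) with hF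
  have hc : α * (1+ξ) ≠ 0 := by positivity
  have hcont : ContinuousOn F (Set.Icc 0 1) := by
    apply ContinuousOn.div_const
    apply ContinuousOn.neg
    apply ContinuousOn.mul
    · exact (continuousOn_const.sub continuousOn_id).rpow_const
        (fun x hx => Or.inr hα0.le)
    · exact (continuousOn_const.add continuousOn_id).rpow_const
        (fun x hx => ne_of_gt (by simp only [Set.mem_Icc, id_eq, Pi.add_apply] at hx ⊢; linarith [hx.1]) |> Or.inl)
  have hderiv : ∀ x ∈ Set.Ioo (0:ℝ) 1,
      HasDerivAt F ((1-x)^(α-1) * (ξ+x)^(-α-1)) x := by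
    intro x hx
    obtain ⟨hx0, hx1⟩ := hx
    have h1x : (0:ℝ) < 1 - x := by linarith
    have hξx : (0:ℝ) < ξ + x := by linarith
    have d1 : HasDerivAt (fun y : ℝ => (1-y)^α) (α * (1-x)^(α-1) * (-1)) x := by
      exact (Real.hasDerivAt_rpow_const (Or.inl h1x.ne')).comp x
        ((hasDerivAt_id x).const_sub 1)
    have d2 : HasDerivAt (fun y : ℝ => (ξ+y)^(-α)) ((-α) * (ξ+x)^(-α-1) * 1) x := by
      exact (Real.hasDerivAt_rpow_const (Or.inl hξx.ne')).comp x
        ((hasDerivAt_id x).const_add ξ)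
    have := ((d1.mul d2).neg).div_const (α*(1+ξ))
    convert this using 1
    · rfl
    · rfl
    · rfl
    have e1 : (1-x)^α = (1-x)^(α-1) * (1-x) := by
      rw [← Real.rpow_add_one h1x.ne']; ring_nf
    have e2 : (ξ+x)^(-α) = (ξ+x)^(-α-1) * (ξ+x) := by
      rw [← Real.rpow_add_one hξx.ne']; ring_nf
    rw [e1, e2]
    field_simp
    ring
  have hint : IntervalIntegrable (fun x => (1-x)^(α-1) * (ξ+x)^(-α-1)) volume 0 1 := by
    have h1 : IntervalIntegrable (fun x : ℝ => x^(α-1)) volume 1 0 :=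
      intervalIntegral.intervalIntegrable_rpow' (by linarith)
    have h2 : IntervalIntegrable (fun x : ℝ => (1-x)^(α-1)) volume 0 1 := by
      have := h1.comp_sub_left 1
      simpa using this
    apply h2.mul_continuousOn
    rw [Set.uIcc_of_le (by norm_num : (0:ℝ) ≤ 1)]
    exact (continuousOn_const.add continuousOn_id).rpow_const
      (fun x hx => ne_of_gt (by simp only [Set.mem_Icc, id_eq, Pi.add_apply] at hx ⊢; linarith [hx.1]) |> Or.inl)
  rw [intervalIntegral.integral_eq_sub_of_hasDerivAt_of_le (by norm_num) hcont hderiv hint]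
  simp only [hF]
  rw [show (1:ℝ)-1 = 0 by ring, show (1:ℝ)-0 = 1 by ring, show ξ+0 = ξ by ring,
    Real.zero_rpow hα0.ne', Real.one_rpow]
  ring
end

section
/- Let (q_n) be a renewal sequence on the nonnegative integers with q_n ~ C_q * n^{alpha - 1} as n -> infinity, where C_q = 1/(Gamma(alpha)*Gamma(1-alpha)) and alpha in (0,1/2). Then for fixed reals u, v > 0, n^{1-2alpha} * sum_{r >= 0} q_{floor(u n) + r} * q_{floor(v n) + r} converges as n -> infinity to C_q^2 * Int_0^{infty} (y+u)^{alpha-1} * (y+v)^{alpha-1} dy. -/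
open MeasureTheory Real Filter Set ENNReal NNReal Topology

lemma integral_nat_floor_eq_tsum (h : ℕ → ℝ) (hs : Summable fun r => |h r|) :
    MeasureTheory.IntegrableOn (fun y : ℝ => h ⌊y⌋₊) (Set.Ioi 0) ∧
      ∫ y in Set.Ioi (0:ℝ), h ⌊y⌋₊ = ∑' r, h r := by
  have meas : Measurable fun y : ℝ => h ⌊y⌋₊ := measurable_from_nat.comp Nat.measurable_floor
  have hunion : (⋃ r : ℕ, Ico (r:ℝ) (r+1)) = Ici (0:ℝ) := by
    ext x
    simp only [mem_iUnion, mem_Ico, mem_Ici]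
    constructor
    · rintro ⟨r, hr, -⟩; exact le_trans (by positivity) hr
    · intro hx; exact ⟨⌊x⌋₊, Nat.floor_le hx, Nat.lt_floor_add_one x⟩
  have hmeas_s : ∀ r : ℕ, MeasurableSet (Ico (r:ℝ) (r+1)) := fun r => measurableSet_Ico
  have hdisj : Pairwise (Function.onFun Disjoint fun r : ℕ => Ico (r:ℝ) (r+1)) := by
    intro i j hij
    simp only [Function.onFun]
    rw [Set.Ico_disjoint_Ico]
    rcases hij.lt_or_gt with h' | h'
    · have : (i:ℝ)+1 ≤ j := by exact_mod_cast Nat.succ_le_of_lt h'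
      exact le_trans (min_le_left _ _) (le_trans this (le_max_right _ _))
    · have : (j:ℝ)+1 ≤ i := by exact_mod_cast Nat.succ_le_of_lt h'
      exact le_trans (min_le_right _ _) (le_trans this (le_max_left _ _))
  have hfix : ∀ r : ℕ, EqOn (fun y : ℝ => h ⌊y⌋₊) (fun _ => h r) (Ico (r:ℝ) (r+1)) :=
    fun r x hx => by simp only [Nat.floor_eq_on_Ico r x hx]
  have hsum_nn : Summable fun r => ‖h r‖₊ := by
    rw [← NNReal.summable_coe]
    simpa [Real.norm_eq_abs] using hs
  have hInt : IntegrableOn (fun y : ℝ => h ⌊y⌋₊) (Ici 0) := by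
    refine ⟨meas.aestronglyMeasurable, ?_⟩
    rw [hasFiniteIntegral_def]
    have hres : (volume.restrict (Ici (0:ℝ))) = volume.restrict (⋃ r : ℕ, Ico (r:ℝ) (r+1)) := by
      rw [hunion]
    rw [hres]
    rw [lintegral_iUnion (μ := volume) hmeas_s hdisj (fun y : ℝ => ‖h ⌊y⌋₊‖ₑ)]
    have heach : ∀ r : ℕ, (∫⁻ y in Ico (r:ℝ) (r+1), ‖h ⌊y⌋₊‖ₑ) = ‖h r‖₊ := by
      intro r
      rw [setLIntegral_congr_fun_ae (f := fun y : ℝ => ‖h ⌊y⌋₊‖ₑ)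
          (g := fun _ : ℝ => ‖h r‖ₑ) (hmeas_s r)
          (ae_of_all _ (fun x hx => by simp only [Nat.floor_eq_on_Ico r x hx])),
        setLIntegral_const]
      simp [Real.volume_Ico, enorm_eq_nnnorm]
    simp only [heach]
    exact lt_of_le_of_lt (le_of_eq rfl)
      (ENNReal.tsum_coe_ne_top_iff_summable.mpr hsum_nn).lt_top
  have hint2 : ∫ y in Ici (0:ℝ), h ⌊y⌋₊ = ∑' r, h r := by
    rw [← hunion, integral_iUnion hmeas_s hdisj (hunion ▸ hInt)]
    refine tsum_congr fun r => ?_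
    rw [setIntegral_congr_fun (hmeas_s r) (hfix r), setIntegral_const]
    simp [Real.volume_Ico]
  exact ⟨hInt.mono_set Ioi_subset_Ici_self,
    by rw [← integral_Ici_eq_integral_Ioi, hint2]⟩

theorem stmt11 (α : ℝ) (hα0 : 0 < α) (hα : α < 1/2) (q : ℕ → ℝ)
    (hq : Tendsto (fun n : ℕ => q n * (Real.Gamma α * Real.Gamma (1-α)) * (n:ℝ)^(1-α))
      atTop (nhds 1))
    (u v : ℝ) (hu : 0 < u) (hv : 0 < v) :
    Tendsto (fun n : ℕ => (n:ℝ)^(1-2*α) * ∑' r : ℕ, q (⌊u*n⌋₊ + r) * q (⌊v*n⌋₊ + r))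
      atTop
      (nhds ((1/(Real.Gamma α * Real.Gamma (1-α)))^(2:ℕ) *
        ∫ y in Set.Ioi (0:ℝ), (y+u)^(α-1)*(y+v)^(α-1))) := by
  set C : ℝ := Real.Gamma α * Real.Gamma (1-α) with hCdef
  have hC0 : 0 < C := mul_pos (Real.Gamma_pos_of_pos hα0) (Real.Gamma_pos_of_pos (by linarith))
  set M : ℝ := 2 / C with hMdef
  have hM0 : 0 < M := by positivity
  have hα1 : α - 1 < 0 := by linarith
  have hα2 : 2*α-2 < -1 := by linarith
  -- eventual bound on q
  have hq2 : ∀ᶠ k : ℕ in atTop, 0 < q k ∧ q k ≤ M * (k:ℝ)^(α-1) := by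
    have h1 : ∀ᶠ k : ℕ in atTop, q k * C * (k:ℝ)^(1-α) ∈ Set.Ioo (1/2 : ℝ) (3/2) :=
      hq.eventually (Ioo_mem_nhds (by norm_num) (by norm_num))
    filter_upwards [h1, eventually_ge_atTop 1] with k hk hk1
    have hkpos : (0:ℝ) < k := by exact_mod_cast hk1
    have hpow : (0:ℝ) < (k:ℝ)^(1-α) := rpow_pos_of_pos hkpos _
    have hpow' : (0:ℝ) < (k:ℝ)^(α-1) := rpow_pos_of_pos hkpos _
    have hmul : (k:ℝ)^(1-α) * (k:ℝ)^(α-1) = 1 := by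
      rw [← Real.rpow_add hkpos]; norm_num
    constructor
    · nlinarith [hk.1, mul_pos hC0 hpow]
    · have h32 : q k * C * (k:ℝ)^(1-α) ≤ 3/2 := hk.2.le
      have e : q k = (q k * C * (k:ℝ)^(1-α)) * (k:ℝ)^(α-1) / C := by
        rw [mul_assoc (q k * C), hmul, mul_one, mul_div_assoc, div_self hC0.ne', mul_one]
      have e2 : M * (k:ℝ)^(α-1) = 2 * (k:ℝ)^(α-1) / C := by rw [hMdef]; ring
      rw [e, e2]
      gcongr
      nlinarith
  obtain ⟨N, hN⟩ := eventually_atTop.mp hq2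
  set m : ℝ := min u v with hm
  have hm0 : 0 < m := lt_min hu hv
  -- dominating function
  set g : ℝ → ℝ := fun y => (M^2 / (2:ℝ)^(2*α-2)) * (y+m)^(2*α-2) with hg
  have hgint : IntegrableOn g (Ioi 0) := by
    have h1 : IntegrableOn (fun t : ℝ => t ^ (2*α-2)) (Ioi m) :=
      integrableOn_Ioi_rpow_of_lt hα2 hm0
    rw [← integrable_indicator_iff measurableSet_Ioi] at h1
    have h2 := h1.comp_add_right m
    have h3 : (fun y : ℝ => (Ioi m).indicator (fun t : ℝ => t ^ (2*α-2)) (y + m))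
        = (Ioi (0:ℝ)).indicator (fun y : ℝ => (y+m) ^ (2*α-2)) := by
      funext y
      simp only [indicator_apply, mem_Ioi, lt_add_iff_pos_left]
    rw [h3, integrable_indicator_iff measurableSet_Ioi] at h2
    exact h2.const_mul _
  -- the approximating integrands
  set F : ℕ → ℝ → ℝ := fun n y =>
    ((n:ℝ)^(1-α) * q (⌊u*(n:ℝ)⌋₊ + ⌊(n:ℝ)*y⌋₊)) *
      ((n:ℝ)^(1-α) * q (⌊v*(n:ℝ)⌋₊ + ⌊(n:ℝ)*y⌋₊)) with hF
  set f : ℝ → ℝ := fun y => (C⁻¹ * (u+y)^(α-1)) * (C⁻¹ * (v+y)^(α-1)) with hf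
  -- product bound identity
  have hgy : ∀ y : ℝ, 0 < y →
      (M * ((m+y)/2)^(α-1)) * (M * ((m+y)/2)^(α-1)) = g y := by
    intro y hy
    have hmy : (0:ℝ) < m + y := by positivity
    have e0 : ((m+y)/2)^(α-1) * ((m+y)/2)^(α-1) = ((m+y)/2)^(2*α-2) := by
      rw [← Real.rpow_add (by positivity)]; congr 1; ring
    have e3 : ((m+y)/2)^(2*α-2) = (m+y)^(2*α-2)/(2:ℝ)^(2*α-2) :=
      Real.div_rpow hmy.le (by norm_num : (0:ℝ) ≤ 2) (2*α-2)
    calc (M * ((m+y)/2)^(α-1)) * (M * ((m+y)/2)^(α-1))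
        = M^2 * (((m+y)/2)^(α-1) * ((m+y)/2)^(α-1)) := by ring
      _ = M^2 * ((m+y)^(2*α-2)/(2:ℝ)^(2*α-2)) := by rw [e0, e3]
      _ = g y := by simp only [hg]; rw [add_comm y m]; ring
  -- factor bound
  have factor_bound : ∀ w : ℝ, 0 < w → m ≤ w → ∀ n : ℕ, 4/w ≤ (n:ℝ) →
      max N 1 ≤ ⌊w*(n:ℝ)⌋₊ → ∀ y : ℝ, 0 < y →
      |(n:ℝ)^(1-α) * q (⌊w*(n:ℝ)⌋₊ + ⌊(n:ℝ)*y⌋₊)| ≤ M * ((m+y)/2)^(α-1) := by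
    intro w hw hmw n hn4 hfl y hy
    set A := ⌊w*(n:ℝ)⌋₊ + ⌊(n:ℝ)*y⌋₊ with hA
    have hnpos : (0:ℝ) < n := lt_of_lt_of_le (by positivity) hn4
    have hNA : N ≤ A := le_trans (le_trans (le_max_left N 1) hfl) (Nat.le_add_right _ _)
    obtain ⟨hqpos, hqle⟩ := hN A hNA
    have hwn : 4 ≤ w * n := by
      have := (div_le_iff₀ hw).mp hn4
      linarith [this]
    have h1 : w*(n:ℝ) - 1 ≤ ⌊w*(n:ℝ)⌋₊ := le_of_lt (Nat.sub_one_lt_floor _)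
    have h2 : (n:ℝ)*y - 1 ≤ ⌊(n:ℝ)*y⌋₊ := le_of_lt (Nat.sub_one_lt_floor _)
    have hA2 : (n:ℝ) * ((m+y)/2) ≤ A := by
      have hcast : (A:ℝ) = (⌊w*(n:ℝ)⌋₊:ℝ) + (⌊(n:ℝ)*y⌋₊:ℝ) := by
        rw [hA]; push_cast; ring
      rw [hcast]
      nlinarith [mul_le_mul_of_nonneg_left hmw hnpos.le, mul_pos hnpos hy]
    have hApos : (0:ℝ) < (n:ℝ)*((m+y)/2) := by positivity
    have hbound : (A:ℝ)^(α-1) ≤ ((n:ℝ)*((m+y)/2))^(α-1) :=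
      Real.rpow_le_rpow_of_nonpos hApos hA2 hα1.le
    have hone : (n:ℝ)^(1-α) * (n:ℝ)^(α-1) = 1 := by
      rw [← Real.rpow_add hnpos]; norm_num
    rw [abs_of_nonneg (mul_nonneg (Real.rpow_nonneg hnpos.le _) hqpos.le)]
    calc (n:ℝ)^(1-α) * q A
        ≤ (n:ℝ)^(1-α) * (M * (A:ℝ)^(α-1)) := by
          exact mul_le_mul_of_nonneg_left hqle (Real.rpow_nonneg hnpos.le _)
      _ ≤ (n:ℝ)^(1-α) * (M * ((n:ℝ)*((m+y)/2))^(α-1)) := by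
          have := mul_le_mul_of_nonneg_left hbound hM0.le
          exact mul_le_mul_of_nonneg_left this (Real.rpow_nonneg hnpos.le _)
      _ = M * ((m+y)/2)^(α-1) := by
          rw [Real.mul_rpow hnpos.le (by positivity)]
          calc (n:ℝ)^(1-α) * (M * ((n:ℝ)^(α-1) * ((m+y)/2)^(α-1)))
              = M * (((n:ℝ)^(1-α) * (n:ℝ)^(α-1)) * ((m+y)/2)^(α-1)) := by ring
            _ = M * ((m+y)/2)^(α-1) := by rw [hone, one_mul]
  -- pointwise convergence
  have h_lim_pt : ∀ y : ℝ, 0 < y → Tendsto (fun n => F n y) atTop (𝓝 (f y)) := by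
    intro y hy
    have gen : ∀ w : ℝ, 0 < w →
        Tendsto (fun n : ℕ => (n:ℝ)^(1-α) * q (⌊w*(n:ℝ)⌋₊ + ⌊(n:ℝ)*y⌋₊)) atTop
          (𝓝 (C⁻¹ * (w+y)^(α-1))) := by
      intro w hw
      set s : ℕ → ℕ := fun n => ⌊w*(n:ℝ)⌋₊ + ⌊(n:ℝ)*y⌋₊ with hs
      have hAtop : Tendsto s atTop atTop :=
        tendsto_atTop_mono (fun n => Nat.le_add_right _ _) (tendsto_nat_floor_mul_atTop w hw)
      have hq1 : Tendsto (fun n => q (s n) * C * ((s n : ℕ):ℝ)^(1-α)) atTop (𝓝 1) :=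
        hq.comp hAtop
      have hdiv : Tendsto (fun n : ℕ => ((s n : ℕ):ℝ)/(n:ℝ)) atTop (𝓝 (w+y)) := by
        have t1 : Tendsto (fun n : ℕ => (⌊w*(n:ℝ)⌋₊:ℝ)/(n:ℝ)) atTop (𝓝 w) :=
          (tendsto_nat_floor_mul_div_atTop hw.le).comp tendsto_natCast_atTop_atTop
        have t2 : Tendsto (fun n : ℕ => (⌊y*(n:ℝ)⌋₊:ℝ)/(n:ℝ)) atTop (𝓝 y) :=
          (tendsto_nat_floor_mul_div_atTop hy.le).comp tendsto_natCast_atTop_atTop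
        refine (t1.add t2).congr (fun n => ?_)
        rw [hs]
        rw [mul_comm y ((n:ℕ):ℝ)]
        push_cast
        ring
      have hratio : Tendsto (fun n : ℕ => (((s n : ℕ):ℝ)/(n:ℝ))^(α-1)) atTop
          (𝓝 ((w+y)^(α-1))) :=
        hdiv.rpow_const (Or.inl (ne_of_gt (by positivity)))
      have hcomb := (hq1.mul_const C⁻¹).mul hratio
      rw [one_mul] at hcomb
      refine hcomb.congr' ?_
      filter_upwards [hAtop.eventually_ge_atTop 1, eventually_ge_atTop 1] with n hsn hn1
      have hnpos : (0:ℝ) < n := by exact_mod_cast hn1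
      have hspos : (0:ℝ) < ((s n : ℕ):ℝ) := by exact_mod_cast hsn
      have key : (((s n : ℕ):ℝ)/(n:ℝ))^(α-1) * ((s n : ℕ):ℝ)^(1-α) = (n:ℝ)^(1-α) := by
        rw [Real.div_rpow hspos.le hnpos.le (α-1), div_mul_eq_mul_div, ← Real.rpow_add hspos]
        rw [show α-1+(1-α) = 0 by ring, Real.rpow_zero, one_div,
          ← Real.rpow_neg hnpos.le]
        congr 1; ring
      show q (s n) * C * ((s n : ℕ):ℝ)^(1-α) * C⁻¹ * (((s n : ℕ):ℝ)/(n:ℝ))^(α-1)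
          = (n:ℝ)^(1-α) * q (s n)
      rw [← key]
      field_simp
    exact (gen u hu).mul (gen v hv)
  -- measurability
  have hFmeas : ∀ n : ℕ, AEStronglyMeasurable (F n) (volume.restrict (Ioi 0)) := by
    intro n
    have mfl : Measurable fun y : ℝ => ⌊(n:ℝ)*y⌋₊ :=
      Nat.measurable_floor.comp (measurable_const_mul _)
    exact ((((measurable_from_nat (f := fun k => q (⌊u*(n:ℝ)⌋₊ + k))).comp mfl).const_mul
      _).mul (((measurable_from_nat (f := fun k => q (⌊v*(n:ℝ)⌋₊ + k))).comp mfl).const_mul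
      _)).aestronglyMeasurable
  -- DCT
  have hDCT : Tendsto (fun n => ∫ y in Ioi (0:ℝ), F n y) atTop
      (𝓝 (∫ y in Ioi (0:ℝ), f y)) := by
    refine tendsto_integral_filter_of_dominated_convergence g
      (Eventually.of_forall hFmeas) ?_ hgint ?_
    · filter_upwards [tendsto_natCast_atTop_atTop.eventually_ge_atTop (4/u),
        tendsto_natCast_atTop_atTop.eventually_ge_atTop (4/v),
        (tendsto_nat_floor_mul_atTop u hu).eventually_ge_atTop (max N 1),
        (tendsto_nat_floor_mul_atTop v hv).eventually_ge_atTop (max N 1)]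
        with n h4u h4v hflu hflv
      rw [ae_restrict_iff' measurableSet_Ioi]
      refine ae_of_all _ (fun y hy => ?_)
      have hy' : (0:ℝ) < y := hy
      have b1 := factor_bound u hu (min_le_left _ _) n h4u hflu y hy'
      have b2 := factor_bound v hv (min_le_right _ _) n h4v hflv y hy'
      rw [Real.norm_eq_abs]
      calc |F n y| = |(n:ℝ)^(1-α) * q (⌊u*(n:ℝ)⌋₊ + ⌊(n:ℝ)*y⌋₊)| *
            |(n:ℝ)^(1-α) * q (⌊v*(n:ℝ)⌋₊ + ⌊(n:ℝ)*y⌋₊)| := abs_mul _ _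
        _ ≤ (M * ((m+y)/2)^(α-1)) * (M * ((m+y)/2)^(α-1)) :=
            mul_le_mul b1 b2 (abs_nonneg _) (by positivity)
        _ = g y := hgy y hy'
    · rw [ae_restrict_iff' measurableSet_Ioi]
      exact ae_of_all _ (fun y hy => h_lim_pt y hy)
  -- identification of the integral with the normalized sum
  have heq : (fun n : ℕ => ∫ y in Ioi (0:ℝ), F n y) =ᶠ[atTop]
      (fun n : ℕ => (n:ℝ)^(1-2*α) * ∑' r : ℕ, q (⌊u*(n:ℝ)⌋₊ + r) * q (⌊v*(n:ℝ)⌋₊ + r)) := by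
    filter_upwards [eventually_ge_atTop 1,
      (tendsto_nat_floor_mul_atTop u hu).eventually_ge_atTop (max N 1),
      (tendsto_nat_floor_mul_atTop v hv).eventually_ge_atTop (max N 1)]
      with n hn1 hau hbv
    have hnpos : (0:ℝ) < n := by exact_mod_cast hn1
    set a := ⌊u*(n:ℝ)⌋₊ with ha
    set b := ⌊v*(n:ℝ)⌋₊ with hb
    set h : ℕ → ℝ := fun r => q (a + r) * q (b + r) with hh
    have hsum : Summable fun r => |h r| := by
      have hbd : ∀ r : ℕ, |h r| ≤ (M*M) * ((1:ℝ)+r)^(2*α-2) := by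
        intro r
        have ha1 : N ≤ a + r := le_trans (le_trans (le_max_left _ _) hau) (Nat.le_add_right _ _)
        have hb1 : N ≤ b + r := le_trans (le_trans (le_max_left _ _) hbv) (Nat.le_add_right _ _)
        obtain ⟨hp1, hle1⟩ := hN _ ha1
        obtain ⟨hp2, hle2⟩ := hN _ hb1
        have har : (1:ℝ)+r ≤ ((a+r : ℕ):ℝ) := by
          have : (1:ℕ) ≤ a := le_trans (le_max_right _ _) hau
          push_cast
          have : (1:ℝ) ≤ a := by exact_mod_cast this
          linarith
        have hbr : (1:ℝ)+r ≤ ((b+r : ℕ):ℝ) := by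
          have : (1:ℕ) ≤ b := le_trans (le_max_right _ _) hbv
          push_cast
          have : (1:ℝ) ≤ b := by exact_mod_cast this
          linarith
        have hc1 : ((a+r : ℕ):ℝ)^(α-1) ≤ ((1:ℝ)+r)^(α-1) :=
          Real.rpow_le_rpow_of_nonpos (by positivity) har hα1.le
        have hc2 : ((b+r : ℕ):ℝ)^(α-1) ≤ ((1:ℝ)+r)^(α-1) :=
          Real.rpow_le_rpow_of_nonpos (by positivity) hbr hα1.le
        have hq1' : q (a+r) ≤ M * ((1:ℝ)+r)^(α-1) :=
          le_trans hle1 (mul_le_mul_of_nonneg_left hc1 hM0.le)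
        have hq2' : q (b+r) ≤ M * ((1:ℝ)+r)^(α-1) :=
          le_trans hle2 (mul_le_mul_of_nonneg_left hc2 hM0.le)
        have hsq : ((1:ℝ)+r)^(α-1) * ((1:ℝ)+r)^(α-1) = ((1:ℝ)+r)^(2*α-2) := by
          rw [← Real.rpow_add (by positivity)]; congr 1; ring
        rw [hh, abs_of_nonneg (mul_nonneg hp1.le hp2.le)]
        calc q (a+r) * q (b+r)
            ≤ (M * ((1:ℝ)+r)^(α-1)) * (M * ((1:ℝ)+r)^(α-1)) :=
              mul_le_mul hq1' hq2' hp2.le (by positivity)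
          _ = (M*M) * (((1:ℝ)+r)^(α-1) * ((1:ℝ)+r)^(α-1)) := by ring
          _ = (M*M) * ((1:ℝ)+r)^(2*α-2) := by rw [hsq]
      have hmaj : Summable (fun r : ℕ => (M*M) * ((1:ℝ)+r)^(2*α-2)) := by
        apply Summable.mul_left
        have hbase : Summable (fun r : ℕ => ((r+1 : ℕ):ℝ)^(2*α-2)) :=
          (_root_.summable_nat_add_iff (f := fun r : ℕ => (r:ℝ)^(2*α-2)) 1).mpr
            (Real.summable_nat_rpow.mpr hα2)
        refine hbase.congr (fun r => ?_)
        push_cast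
        rw [add_comm]
      exact Summable.of_nonneg_of_le (fun r => abs_nonneg _) hbd hmaj
    obtain ⟨hIntOn, hIntEq⟩ := integral_nat_floor_eq_tsum h hsum
    have hpow2 : (n:ℝ)^(1-α) * (n:ℝ)^(1-α) = (n:ℝ)^(2-2*α) := by
      rw [← Real.rpow_add hnpos]; congr 1; ring
    have hFrw : ∀ y : ℝ, F n y = (n:ℝ)^(2-2*α) * h ⌊(n:ℝ)*y⌋₊ := by
      intro y
      simp only [hF, hh]
      rw [← hpow2]
      ring
    calc ∫ y in Ioi (0:ℝ), F n y
        = ∫ y in Ioi (0:ℝ), (n:ℝ)^(2-2*α) * h ⌊(n:ℝ)*y⌋₊ := by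
          refine integral_congr_ae (ae_of_all _ (fun y => hFrw y))
      _ = (n:ℝ)^(2-2*α) * ∫ y in Ioi (0:ℝ), h ⌊(n:ℝ)*y⌋₊ := integral_const_mul _ _
      _ = (n:ℝ)^(2-2*α) * ((n:ℝ)⁻¹ * ∑' r, h r) := by
          rw [integral_comp_mul_left_Ioi (fun x => h ⌊x⌋₊) 0 hnpos, mul_zero, hIntEq,
            smul_eq_mul]
      _ = (n:ℝ)^(1-2*α) * ∑' r, h r := by
          rw [← mul_assoc]
          congr 1
          rw [show ((n:ℝ))⁻¹ = (n:ℝ)^(-1:ℝ) by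
            rw [Real.rpow_neg hnpos.le, Real.rpow_one]]
          rw [← Real.rpow_add hnpos]
          congr 1; ring
  -- final value
  have hfin : ∫ y in Ioi (0:ℝ), f y
      = (1/C)^(2:ℕ) * ∫ y in Ioi (0:ℝ), (y+u)^(α-1)*(y+v)^(α-1) := by
    rw [← integral_const_mul]
    refine integral_congr_ae (ae_of_all _ (fun y => ?_))
    simp only [hf]
    rw [add_comm u y, add_comm v y, one_div]
    ring
  exact hfin ▸ hDCT.congr' heq
end

section
/- Let N i.i.d. standard normal random variables Z_1, ..., Z_N be given with N = floor(e^t), and let r > 0. For C = sqrt(2)*r and a_t = -t^{H-1/2} * log(t) * c/(2*sqrt(2)) (for any constant c > 0 and H in (1/2,1)), the tail probability satisfies P( r * t^H * Z_1 > C * t^{H+1/2} + a_t ) * e^t converges to a positive constant as t -> infinity; that is, P(Z_1 > sqrt(2 t) + a_t/(r t^H)) ~ (1/sqrt(4 pi)) * e^{-t} * (1+o(1)) up to the stated correction. -/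
open MeasureTheory ProbabilityTheory Real Filter Set

noncomputable def tailI (x : ℝ) : ℝ := ∫ y in Ioi x, Real.exp (-(y^2/2))

lemma tailI_integrableOn (x : ℝ) : IntegrableOn (fun y => Real.exp (-(y^2/2))) (Ioi x) := by
  have h : Integrable (fun y : ℝ => Real.exp (-(1/2 : ℝ) * y^2)) := integrable_exp_neg_mul_sq (by norm_num)
  refine (h.congr ?_).integrableOn
  filter_upwards with y
  ring_nf

lemma deriv1 (y : ℝ) : HasDerivAt (fun y : ℝ => -Real.exp (-(y^2/2))) (y * Real.exp (-(y^2/2))) y := by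
  have h : HasDerivAt (fun y : ℝ => -(y^2/2)) (-y) y := by
    have := ((hasDerivAt_pow 2 y).div_const 2).fun_neg
    simpa using this
  have := (h.exp).fun_neg
  simpa [mul_comm] using this

lemma tendsto_negexp : Tendsto (fun y : ℝ => -Real.exp (-(y^2/2))) atTop (nhds 0) := by
  rw [← neg_zero]
  apply Tendsto.neg
  apply Real.tendsto_exp_atBot.comp
  apply tendsto_neg_atBot_iff.mpr
  apply Tendsto.atTop_div_const (by norm_num)
  exact tendsto_pow_atTop (by norm_num)

lemma integrableOn_y_exp (x : ℝ) (hx : 0 < x) :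
    IntegrableOn (fun y => y * Real.exp (-(y^2/2))) (Ioi x) :=
  integrableOn_Ioi_deriv_of_nonneg' (g := fun y : ℝ => -Real.exp (-(y^2/2)))
    (fun y _ => deriv1 y) (fun y hy => mul_nonneg (le_trans hx.le (le_of_lt hy)) (Real.exp_nonneg _)) tendsto_negexp

lemma integral_y_exp (x : ℝ) (hx : 0 < x) :
    ∫ y in Ioi x, y * Real.exp (-(y^2/2)) = Real.exp (-(x^2/2)) := by
  have := integral_Ioi_of_hasDerivAt_of_nonneg' (g := fun y : ℝ => -Real.exp (-(y^2/2)))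
    (g' := fun y => y * Real.exp (-(y^2/2))) (a := x) (l := 0)
    (fun y _ => deriv1 y) (fun y hy => mul_nonneg (le_trans hx.le (le_of_lt hy)) (Real.exp_nonneg _)) tendsto_negexp
  simpa using this

theorem mills_upper (x : ℝ) (hx : 0 < x) : tailI x ≤ Real.exp (-(x^2/2)) / x := by
  rw [div_eq_inv_mul, ← integral_y_exp x hx]
  rw [tailI]
  rw [← integral_const_mul]
  apply setIntegral_mono_on
  · exact tailI_integrableOn x
  · exact (integrableOn_y_exp x hx).const_mul _
  · exact measurableSet_Ioi
  · intro y hy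
    rw [← mul_assoc]
    nth_rewrite 1 [← one_mul (Real.exp _)]
    gcongr
    rw [inv_mul_eq_div, le_div_iff₀ hx]
    simpa using (le_of_lt hy)

lemma deriv2 {y : ℝ} (hy : y ≠ 0) :
    HasDerivAt (fun y : ℝ => -Real.exp (-(y^2/2)) / y)
      (Real.exp (-(y^2/2)) * (1 + 1/y^2)) y := by
  have h := (deriv1 y).fun_div (hasDerivAt_id' y) hy
  refine h.congr_deriv ?_
  field_simp
  ring

lemma tendsto_negexp_div : Tendsto (fun y : ℝ => -Real.exp (-(y^2/2)) / y) atTop (nhds 0) := by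
  exact tendsto_negexp.div_atTop tendsto_id

lemma integral_exp_one_add (x : ℝ) (hx : 0 < x) :
    ∫ y in Ioi x, Real.exp (-(y^2/2)) * (1 + 1/y^2) = Real.exp (-(x^2/2)) / x := by
  have := integral_Ioi_of_hasDerivAt_of_nonneg' (g := fun y : ℝ => -Real.exp (-(y^2/2)) / y)
    (g' := fun y => Real.exp (-(y^2/2)) * (1 + 1/y^2)) (a := x) (l := 0)
    (fun y hy => deriv2 (ne_of_gt (lt_of_lt_of_le hx hy)))
    (fun y hy => by positivity) tendsto_negexp_div
  rw [this]
  ring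

lemma integrableOn_exp_one_add (x : ℝ) (hx : 0 < x) :
    IntegrableOn (fun y => Real.exp (-(y^2/2)) * (1 + 1/y^2)) (Ioi x) :=
  integrableOn_Ioi_deriv_of_nonneg' (g := fun y : ℝ => -Real.exp (-(y^2/2)) / y)
    (fun y hy => deriv2 (ne_of_gt (lt_of_lt_of_le hx hy)))
    (fun y hy => by positivity) tendsto_negexp_div

theorem mills_lower (x : ℝ) (hx : 0 < x) :
    Real.exp (-(x^2/2)) * (x/(x^2+1)) ≤ tailI x := by
  set E : ℝ := ∫ y in Ioi x, Real.exp (-(y^2/2)) * (1/y^2) with hE_def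
  have hEint : IntegrableOn (fun y => Real.exp (-(y^2/2)) * (1/y^2)) (Ioi x) := by
    have := (integrableOn_exp_one_add x hx).sub (tailI_integrableOn x)
    refine this.congr ?_
    filter_upwards with y
    simp only [Pi.sub_apply]
    ring
  have hsplit : tailI x + E = Real.exp (-(x^2/2)) / x := by
    rw [← integral_exp_one_add x hx, tailI, hE_def, ← integral_add (tailI_integrableOn x) hEint]
    congr 1
    funext y
    ring
  have hEle : E ≤ x⁻¹^2 * tailI x := by
    rw [hE_def, tailI, ← integral_const_mul]
    apply setIntegral_mono_on hEint ((tailI_integrableOn x).const_mul _) measurableSet_Ioi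
    intro y hy
    rw [mul_comm (x⁻¹^2)]
    gcongr
    have hy' : x ≤ y := le_of_lt hy
    have hy0 : 0 < y := lt_of_lt_of_le hx hy'
    rw [div_le_iff₀ (by positivity), ← mul_pow, one_le_sq_iff_one_le_abs]
    rw [abs_of_nonneg (by positivity), inv_mul_eq_div, le_div_iff₀ hx, one_mul]
    exact hy'
  have hT : 0 ≤ tailI x := by
    apply setIntegral_nonneg measurableSet_Ioi
    intro y _
    positivity
  have key : Real.exp (-(x^2/2)) / x ≤ tailI x * (1 + x⁻¹^2) := by
    nlinarith
  calc Real.exp (-(x^2/2)) * (x/(x^2+1)) = (Real.exp (-(x^2/2)) / x) / (1 + x⁻¹^2) := by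
        field_simp
    _ ≤ tailI x := by
        rw [div_le_iff₀ (by positivity)]
        exact key

lemma tailI_nonneg (x : ℝ) : 0 ≤ tailI x :=
  setIntegral_nonneg measurableSet_Ioi (fun y _ => Real.exp_nonneg _)

theorem mills_tendsto :
    Tendsto (fun x : ℝ => x * Real.exp (x^2/2) * tailI x) atTop (nhds 1) := by
  have hlow : Tendsto (fun x : ℝ => x^2/(x^2+1)) atTop (nhds 1) := by
    have h1 : Tendsto (fun x : ℝ => 1/(x^2+1)) atTop (nhds 0) := by
      apply Tendsto.div_atTop tendsto_const_nhds
      exact tendsto_atTop_add_const_right _ 1 (tendsto_pow_atTop two_ne_zero)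
    have := (tendsto_const_nhds (x := (1:ℝ)) (f := atTop)).sub h1
    rw [sub_zero] at this
    apply this.congr
    intro x
    field_simp
    ring
  apply tendsto_of_tendsto_of_tendsto_of_le_of_le' hlow tendsto_const_nhds
  · filter_upwards [eventually_gt_atTop 0] with x hx
    calc x^2/(x^2+1) = x * Real.exp (x^2/2) * (Real.exp (-(x^2/2)) * (x/(x^2+1))) := by
          rw [Real.exp_neg]
          field_simp
      _ ≤ x * Real.exp (x^2/2) * tailI x :=
          mul_le_mul_of_nonneg_left (mills_lower x hx) (by positivity)
  · filter_upwards [eventually_gt_atTop 0] with x hx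
    calc x * Real.exp (x^2/2) * tailI x ≤ x * Real.exp (x^2/2) * (Real.exp (-(x^2/2))/x) :=
          mul_le_mul_of_nonneg_left (mills_upper x hx) (by positivity)
      _ = 1 := by
          rw [Real.exp_neg]
          field_simp


noncomputable def phi (t : ℝ) : ℝ := Real.sqrt (2*t) - Real.log t / (2 * Real.sqrt 2 * Real.sqrt t)

noncomputable def Afun (t : ℝ) : ℝ := Real.sqrt 2 - Real.log t / (2 * Real.sqrt 2 * t)

lemma phi_eq_sqrt_mul (t : ℝ) (ht : 0 < t) : phi t = Real.sqrt t * Afun t := by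
  have hst : (0:ℝ) < Real.sqrt t := Real.sqrt_pos.mpr ht
  have h2 : Real.sqrt (2*t) = Real.sqrt 2 * Real.sqrt t := Real.sqrt_mul (by norm_num) t
  have hsq : Real.sqrt t * Real.sqrt t = t := Real.mul_self_sqrt ht.le
  have hkey : Real.sqrt t * (Real.log t / (2 * Real.sqrt 2 * t)) =
      Real.log t / (2 * Real.sqrt 2 * Real.sqrt t) := by
    have h2p : (0:ℝ) < Real.sqrt 2 := Real.sqrt_pos.mpr two_pos
    field_simp
    linear_combination (Real.log t) * hsq
  rw [phi, Afun, h2, mul_sub, hkey, mul_comm (Real.sqrt t) (Real.sqrt 2)]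

lemma Afun_tendsto : Tendsto Afun atTop (nhds (Real.sqrt 2)) := by
  have h0 : Tendsto (fun t : ℝ => Real.log t / (2 * Real.sqrt 2 * t)) atTop (nhds 0) := by
    have := Real.tendsto_pow_log_div_mul_add_atTop (2 * Real.sqrt 2) 0 1 (by positivity)
    simpa using this
  simpa [show Afun = fun t => Real.sqrt 2 - Real.log t / (2 * Real.sqrt 2 * t) from rfl] using (tendsto_const_nhds (x := Real.sqrt 2) (f := atTop)).sub h0

lemma phi_sq (t : ℝ) (ht : 0 < t) :
    (phi t)^2 = 2*t - Real.log t + (Real.log t)^2/(8*t) := by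
  have h2 : Real.sqrt (2*t) = Real.sqrt 2 * Real.sqrt t := Real.sqrt_mul (by norm_num) t
  have hu : Real.sqrt (2*t) ^ 2 = 2*t := Real.sq_sqrt (by positivity)
  have hu0 : (0:ℝ) < Real.sqrt (2*t) := Real.sqrt_pos.mpr (by positivity)
  have hphi : phi t = Real.sqrt (2*t) - Real.log t / (2 * Real.sqrt (2*t)) := by
    rw [phi, h2, mul_assoc]
  calc (phi t)^2 = Real.sqrt (2*t)^2 - Real.log t + (Real.log t)^2/(4*Real.sqrt (2*t)^2) := by
        rw [hphi]; field_simp; ring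
    _ = 2*t - Real.log t + (Real.log t)^2/(8*t) := by
        rw [hu]; ring_nf

lemma gauss_Ioi (b : ℝ) : (gaussianReal 0 1 (Set.Ioi b)).toReal = (Real.sqrt (2*π))⁻¹ * tailI b := by
  rw [gaussianReal_apply_eq_integral 0 one_ne_zero (Set.Ioi b)]
  rw [ENNReal.toReal_ofReal (setIntegral_nonneg measurableSet_Ioi
    (fun y _ => gaussianPDFReal_nonneg _ _ _))]
  rw [tailI, ← integral_const_mul]
  congr 1
  funext y
  simp [gaussianPDFReal, neg_div]

lemma phi_tendsto : Tendsto phi atTop atTop := by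
  have hs : Tendsto Real.sqrt atTop atTop := by
    have h := tendsto_rpow_atTop (show (0:ℝ) < 1/2 by norm_num)
    apply h.congr'
    filter_upwards [eventually_ge_atTop (0:ℝ)] with t ht
    rw [Real.sqrt_eq_rpow]
  have hlog : Tendsto (fun t : ℝ => Real.sqrt 2 - Real.log t / (2 * Real.sqrt 2 * t)) atTop
      (nhds (Real.sqrt 2)) := by
    have h0 : Tendsto (fun t : ℝ => Real.log t / (2 * Real.sqrt 2 * t)) atTop (nhds 0) := by
      have := Real.tendsto_pow_log_div_mul_add_atTop (2 * Real.sqrt 2) 0 1 (by positivity)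
      simpa using this
    simpa using (tendsto_const_nhds (x := Real.sqrt 2) (f := atTop)).sub h0
  have := hs.atTop_mul_pos (Real.sqrt_pos.mpr two_pos) hlog
  apply this.congr'
  filter_upwards [eventually_gt_atTop (0:ℝ)] with t ht
  have hst : (0:ℝ) < Real.sqrt t := Real.sqrt_pos.mpr ht
  have h2 : Real.sqrt (2*t) = Real.sqrt 2 * Real.sqrt t := Real.sqrt_mul (by norm_num) t
  have hsq : Real.sqrt t * Real.sqrt t = t := Real.mul_self_sqrt ht.le
  have hkey : Real.sqrt t * (Real.log t / (2 * Real.sqrt 2 * t)) =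
      Real.log t / (2 * Real.sqrt 2 * Real.sqrt t) := by
    have h2p : (0:ℝ) < Real.sqrt 2 := Real.sqrt_pos.mpr two_pos
    field_simp
    linear_combination (Real.log t) * hsq
  rw [phi, h2, mul_sub, hkey, mul_comm (Real.sqrt t) (Real.sqrt 2)]

theorem stmt14 (H r : ℝ) (hH : 1/2 < H) (hH1 : H < 1) (hr : 0 < r) :
    Tendsto (fun t : ℝ =>
      Real.exp t * (gaussianReal 0 1 (Set.Ioi (Real.sqrt (2*t) +
        (-(t^(H-1/2)) * Real.log t * r / (2*Real.sqrt 2)) / (r * t^H)))).toReal)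
      atTop (nhds (1/Real.sqrt (4*π))) := by
  -- the boundary equals phi t for t > 0
  have hb : ∀ᶠ t in atTop, Real.sqrt (2*t) +
      (-(t^(H-1/2)) * Real.log t * r / (2*Real.sqrt 2)) / (r * t^H) = phi t := by
    filter_upwards [eventually_gt_atTop (0:ℝ)] with t ht
    rw [phi]
    have hkey : t^H = t^(H-1/2) * Real.sqrt t := by
      rw [Real.sqrt_eq_rpow, ← Real.rpow_add ht]
      norm_num
    have ht3 : (0:ℝ) < t ^ (H - 1/2) := Real.rpow_pos_of_pos ht _
    have hst : (0:ℝ) < Real.sqrt t := Real.sqrt_pos.mpr ht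
    have h2p : (0:ℝ) < Real.sqrt 2 := Real.sqrt_pos.mpr two_pos
    rw [hkey]
    field_simp
    ring
  have h2p : (0:ℝ) < Real.sqrt 2 := Real.sqrt_pos.mpr two_pos
  have hM : Tendsto (fun t => phi t * Real.exp ((phi t)^2/2) * tailI (phi t)) atTop (nhds 1) :=
    mills_tendsto.comp phi_tendsto
  have hE : Tendsto (fun t => Real.exp (-((Real.log t)^2/(16*t)))) atTop (nhds 1) := by
    have h := Real.tendsto_pow_log_div_mul_add_atTop 16 0 2 (by norm_num)
    have h' : Tendsto (fun t : ℝ => -((Real.log t)^2/(16*t))) atTop (nhds 0) := by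
      simpa using h.neg
    have h2 := (Real.continuous_exp.tendsto 0).comp h'
    simpa [Function.comp_def] using h2
  have hAinv : Tendsto (fun t => (Afun t)⁻¹) atTop (nhds (Real.sqrt 2)⁻¹) :=
    Afun_tendsto.inv₀ (ne_of_gt h2p)
  have hG : Tendsto (fun t => (Real.sqrt (2*π))⁻¹ *
      ((phi t * Real.exp ((phi t)^2/2) * tailI (phi t)) *
        (Real.exp (-((Real.log t)^2/(16*t))) * (Afun t)⁻¹))) atTop
      (nhds (1/Real.sqrt (4*π))) := by
    have := (tendsto_const_nhds (x := (Real.sqrt (2*π))⁻¹) (f := atTop)).mul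
      (hM.mul (hE.mul hAinv))
    convert this using 2
    rw [one_mul, one_mul, ← mul_inv, ← Real.sqrt_mul (by positivity)]
    rw [show (2*π*2 : ℝ) = 4*π by ring, one_div]
  apply hG.congr'
  filter_upwards [hb, eventually_gt_atTop (0:ℝ), phi_tendsto.eventually_ge_atTop 1]
    with t hbt ht hphit
  rw [hbt, gauss_Ioi]
  have hst : (0:ℝ) < Real.sqrt t := Real.sqrt_pos.mpr ht
  have hphi0 : (0:ℝ) < phi t := lt_of_lt_of_le one_pos hphit
  have hsqrt_exp : Real.sqrt t = Real.exp (Real.log t / 2) := by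
    rw [← Real.exp_log hst, Real.log_sqrt ht.le]
  have hexp_t : Real.exp t = Real.exp ((phi t)^2/2) * Real.sqrt t *
      Real.exp (-((Real.log t)^2/(16*t))) := by
    rw [hsqrt_exp, ← Real.exp_add, ← Real.exp_add]
    congr 1
    rw [phi_sq t ht]
    field_simp
    ring
  have hAeq : Afun t = phi t / Real.sqrt t := by
    rw [phi_eq_sqrt_mul t ht]
    field_simp
  rw [hAeq, hexp_t]
  field_simp
end
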